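/- Monotonicity of Algorithm II for m ≥ 2: assume m ≥ 2, each x_i = (1, z_iᵀ)ᵀ with z_i ∈ ℝ^{m−1}, and X has full rank m. If w, w' ∈ Ω₊ are related by the Algorithm II update, i.e. w'_i = w_i·(x_iᵀ M(w)^{-1} x_i − 1)/(m − 1) for every i, then det M(w) ≤ det M(w'). -/

import Mathlib

open Matrix Filter

/-- The information matrix `M(w) = ∑ i, w_i x_i x_iᵀ`. -/
noncomputable def Mmat {n m : ℕ} (x : Fin n → Fin m → ℝ) (w : Fin n → ℝ) :
    Matrix (Fin m) (Fin m) ℝ :=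
  ∑ i, w i • Matrix.vecMulVec (x i) (x i)

section Aux

open scoped MatrixOrder

set_option linter.unusedSectionVars false

/-- trace of a Hermitian matrix equals sum of eigenvalues -/
lemma trace_eq_sum_eig {s : ℕ} {Z : Matrix (Fin s) (Fin s) ℝ} (hZ : Z.IsHermitian) :
    Z.trace = ∑ i, hZ.eigenvalues i := by
  conv_lhs => rw [hZ.spectral_theorem, Unitary.conjStarAlgAut_apply]
  rw [Matrix.trace_mul_cycle]
  rw [show (star (hZ.eigenvectorUnitary : Matrix (Fin s) (Fin s) ℝ)) *
      (hZ.eigenvectorUnitary : Matrix (Fin s) (Fin s) ℝ) = 1 from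
    (Matrix.mem_unitaryGroup_iff').mp (hZ.eigenvectorUnitary).2]
  rw [one_mul, Matrix.trace_diagonal]
  simp

/-- AM-GM: positive definite matrix with small trace has small determinant. -/
lemma det_le_one_of_trace {s : ℕ} (hs : 0 < s) {Z : Matrix (Fin s) (Fin s) ℝ}
    (hZ : Z.PosDef) (htr : Z.trace ≤ s) : Z.det ≤ 1 := by
  have hei := hZ.eigenvalues_pos
  have hdet : Z.det = ∏ i, hZ.1.eigenvalues i := hZ.1.det_eq_prod_eigenvalues
  have htr' : ∑ i, hZ.1.eigenvalues i ≤ s := by rwa [← trace_eq_sum_eig hZ.1]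
  -- AM-GM with equal weights 1/s
  have hAM := Real.geom_mean_le_arith_mean_weighted Finset.univ
      (fun _ : Fin s => (s : ℝ)⁻¹) hZ.1.eigenvalues
      (fun i _ => by positivity)
      (by simp [Finset.card_univ]; field_simp)
      (fun i _ => (hei i).le)
  -- ∏ λ^{1/s} ≤ ∑ λ/s ≤ 1
  have h1 : (∏ i, hZ.1.eigenvalues i ^ ((s : ℝ)⁻¹)) ≤ 1 := by
    refine hAM.trans ?_
    rw [← Finset.mul_sum]
    calc (s:ℝ)⁻¹ * ∑ i, hZ.1.eigenvalues i ≤ (s:ℝ)⁻¹ * s := by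
          exact mul_le_mul_of_nonneg_left htr' (by positivity)
      _ = 1 := by field_simp
  have h2 : (∏ i, hZ.1.eigenvalues i) ^ ((s : ℝ)⁻¹) ≤ 1 := by
    rwa [← Real.finset_prod_rpow Finset.univ _ (fun i _ => (hei i).le)]
  have hprodpos : 0 < ∏ i, hZ.1.eigenvalues i := Finset.prod_pos (fun i _ => hei i)
  rw [hdet]
  by_contra hlt
  push_neg at hlt
  have h3 : (1:ℝ) < (∏ i, hZ.1.eigenvalues i) ^ ((s:ℝ)⁻¹) :=
    (Real.one_lt_rpow_iff_of_pos hprodpos).mpr (Or.inl ⟨hlt, by positivity⟩)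
  linarith

section Core
variable {n s : ℕ}

/-- positive definiteness of `Gᵀ * G` for invertible real `G`. -/
lemma posDef_transpose_mul_self {G : Matrix (Fin s) (Fin s) ℝ} (hG : IsUnit G.det) :
    (Gᵀ * G).PosDef := by
  refine Matrix.PosDef.of_dotProduct_mulVec_pos ?_ ?_
  · have := Matrix.posSemidef_conjTranspose_mul_self G
    simpa [Matrix.conjTranspose_eq_transpose_of_trivial] using this.1
  · intro x hx
    have hGx : G *ᵥ x ≠ 0 := by
      intro h
      have hinj := Matrix.mulVec_injective_iff_isUnit.mpr ((Matrix.isUnit_iff_isUnit_det G).mpr hG)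
      exact hx (hinj (by simpa [Matrix.mulVec_zero] using h))
    have : (star x) ⬝ᵥ ((Gᵀ * G) *ᵥ x) = (G *ᵥ x) ⬝ᵥ (G *ᵥ x) := by
      simp only [star_trivial, ← Matrix.mulVec_mulVec]
      rw [dotProduct_mulVec x, Matrix.vecMul_transpose]
    rw [this]
    rcases lt_or_eq_of_le (Finset.sum_nonneg fun i _ => mul_self_nonneg ((G *ᵥ x) i)) with h | h
    · exact h
    · exact absurd (dotProduct_self_eq_zero.mp h.symm) hGx

end Core

section Core2
variable {s : ℕ}

lemma posDef_of_posSemidef_det_ne_zero {Z : Matrix (Fin s) (Fin s) ℝ}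
    (hZ : Z.PosSemidef) (h : Z.det ≠ 0) : Z.PosDef := by
  refine Matrix.PosDef.of_dotProduct_mulVec_pos hZ.1 (fun x hx => ?_)
  set W := CFC.sqrt Z with hW
  have hWW : W * W = Z := CFC.sqrt_mul_sqrt_self Z hZ.nonneg
  have hWherm : Wᵀ = W := by
    have := (CFC.sqrt_nonneg Z).posSemidef.1
    rwa [Matrix.IsHermitian, Matrix.conjTranspose_eq_transpose_of_trivial] at this
  have hdW : W.det ≠ 0 := by
    intro h0
    apply h
    rw [← hWW, Matrix.det_mul, h0, mul_zero]
  have hWx : W *ᵥ x ≠ 0 := by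
    intro h0
    have hinj := Matrix.mulVec_injective_iff_isUnit.mpr
      ((Matrix.isUnit_iff_isUnit_det W).mpr hdW.isUnit)
    exact hx (hinj (by simpa [Matrix.mulVec_zero] using h0))
  have hform : (star x) ⬝ᵥ (Z *ᵥ x) = (W *ᵥ x) ⬝ᵥ (W *ᵥ x) := by
    rw [← hWW]
    simp only [star_trivial, ← Matrix.mulVec_mulVec]
    rw [dotProduct_mulVec x]
    rw [show x ᵥ* W = W *ᵥ x by rw [← hWherm, Matrix.vecMul_transpose, hWherm]]
  rw [hform]
  rcases lt_or_eq_of_le (Finset.sum_nonneg fun i _ => mul_self_nonneg ((W *ᵥ x) i)) with hlt | heq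
  · exact hlt
  · exact absurd (dotProduct_self_eq_zero.mp heq.symm) hWx

end Core2

lemma trace_transpose_mul_vecMulVec {s : ℕ} (R : Matrix (Fin s) (Fin s) ℝ) (a b : Fin s → ℝ) :
    (Rᵀ * Matrix.vecMulVec a b).trace = a ⬝ᵥ (R *ᵥ b) := by
  simp only [Matrix.trace, Matrix.diag, Matrix.mul_apply, Matrix.vecMulVec_apply,
    Matrix.mulVec, dotProduct, Matrix.transpose_apply, Finset.mul_sum]
  rw [Finset.sum_comm]
  apply Finset.sum_congr rfl
  intros l _
  apply Finset.sum_congr rfl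
  intros j _
  ring

section Core3
variable {n s : ℕ}

/-- Core inequality: under the trace/update conditions, `det G ≤ 1`. -/
lemma core_det_le_one (hs : 0 < s) (w w' : Fin n → ℝ)
    (hw0 : ∀ i, 0 ≤ w i) (hw1 : ∑ i, w i = 1)
    (u v : Fin n → Fin s → ℝ)
    (huw : ∀ i, w i * (u i ⬝ᵥ u i) = s * w' i)
    (hv : ∑ i, w' i * (v i ⬝ᵥ v i) = s)
    {G : Matrix (Fin s) (Fin s) ℝ}
    (hG : G = ∑ i, w i • Matrix.vecMulVec (u i) (v i))
    (hGdet : 0 < G.det) : G.det ≤ 1 := by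
  classical
  -- Y = Gᵀ G is positive definite
  have hYpsd : (Gᵀ * G).PosSemidef := by
    have := Matrix.posSemidef_conjTranspose_mul_self G
    rwa [Matrix.conjTranspose_eq_transpose_of_trivial] at this
  have hdetY : (Gᵀ * G).det = G.det * G.det := by
    rw [Matrix.det_mul, Matrix.det_transpose]
  have hY : (Gᵀ * G).PosDef :=
    posDef_of_posSemidef_det_ne_zero hYpsd (by rw [hdetY]; positivity)
  -- Z = sqrt of Y
  set Z := CFC.sqrt (Gᵀ * G) with hZdef
  have hZpsd : Z.PosSemidef := (CFC.sqrt_nonneg _).posSemidef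
  have hZZ : Z * Z = Gᵀ * G := CFC.sqrt_mul_sqrt_self _ hY.posSemidef.nonneg
  have hdetZ : Z.det * Z.det = G.det * G.det := by rw [← Matrix.det_mul, hZZ, hdetY]
  have hZdetne : Z.det ≠ 0 := by
    intro h0; rw [h0, mul_zero] at hdetZ; nlinarith
  have hZpd : Z.PosDef := posDef_of_posSemidef_det_ne_zero hZpsd hZdetne
  have hZherm : Zᵀ = Z := by
    have := hZpsd.1
    rwa [Matrix.IsHermitian, Matrix.conjTranspose_eq_transpose_of_trivial] at this
  have hZunit : IsUnit Z.det := hZdetne.isUnit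
  -- R := G * Z⁻¹ is orthogonal
  set R := G * Z⁻¹ with hRdef
  have hZinv : Z * Z⁻¹ = 1 := Matrix.mul_nonsing_inv Z hZunit
  have hZinv' : Z⁻¹ * Z = 1 := Matrix.nonsing_inv_mul Z hZunit
  have hZinvT : (Z⁻¹)ᵀ = Z⁻¹ := by rw [Matrix.transpose_nonsing_inv, hZherm]
  have hRTR : Rᵀ * R = 1 := by
    rw [hRdef, Matrix.transpose_mul, hZinvT]
    calc Z⁻¹ * Gᵀ * (G * Z⁻¹) = Z⁻¹ * (Gᵀ * G) * Z⁻¹ := by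
          simp only [Matrix.mul_assoc]
      _ = Z⁻¹ * (Z * Z) * Z⁻¹ := by rw [hZZ]
      _ = (Z⁻¹ * Z) * (Z * Z⁻¹) := by simp only [Matrix.mul_assoc]
      _ = 1 := by rw [hZinv, hZinv', Matrix.one_mul]
  have h1 : Rᵀ * G = Z := by
    rw [hRdef, Matrix.transpose_mul, hZinvT]
    calc Z⁻¹ * Gᵀ * G = Z⁻¹ * (Gᵀ * G) := by rw [Matrix.mul_assoc]
      _ = Z⁻¹ * (Z * Z) := by rw [hZZ]
      _ = (Z⁻¹ * Z) * Z := by rw [Matrix.mul_assoc]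
      _ = Z := by rw [hZinv', Matrix.one_mul]
  -- trace identity : trace Z = ∑ w_i * (u_i ⬝ (R v_i))
  have htrZ : Z.trace = ∑ i, w i * (u i ⬝ᵥ (R *ᵥ v i)) := by
    rw [← h1, hG, Matrix.mul_sum]
    rw [Matrix.trace_sum]
    refine Finset.sum_congr rfl fun i _ => ?_
    rw [Matrix.mul_smul, Matrix.trace_smul]
    rw [trace_transpose_mul_vecMulVec]
    simp [smul_eq_mul]
  -- norm preservation
  have hRnorm : ∀ y : Fin s → ℝ, (R *ᵥ y) ⬝ᵥ (R *ᵥ y) = y ⬝ᵥ y := by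
    intro y
    rw [dotProduct_mulVec (R *ᵥ y)]
    rw [show (R *ᵥ y) ᵥ* R = (Rᵀ * R) *ᵥ y by
      conv_lhs => rw [← Matrix.transpose_transpose R, Matrix.vecMul_transpose]
      rw [Matrix.mulVec_mulVec, Matrix.transpose_transpose]]
    rw [hRTR, Matrix.one_mulVec]
  have hdots : ∀ i, 0 ≤ u i ⬝ᵥ u i := fun i =>
    Finset.sum_nonneg fun j _ => mul_self_nonneg _
  have hdots' : ∀ i, 0 ≤ v i ⬝ᵥ v i := fun i =>
    Finset.sum_nonneg fun j _ => mul_self_nonneg _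
  -- pointwise Cauchy-Schwarz
  have hptCS : ∀ i, u i ⬝ᵥ (R *ᵥ v i) ≤ Real.sqrt ((u i ⬝ᵥ u i) * (v i ⬝ᵥ v i)) := by
    intro i
    have hcs : (u i ⬝ᵥ (R *ᵥ v i))^2 ≤ (u i ⬝ᵥ u i) * ((R *ᵥ v i) ⬝ᵥ (R *ᵥ v i)) := by
      have := Finset.sum_mul_sq_le_sq_mul_sq Finset.univ (u i) (R *ᵥ v i)
      simpa [dotProduct, pow_two, Finset.mul_sum] using this
    rw [hRnorm] at hcs
    calc u i ⬝ᵥ (R *ᵥ v i) ≤ |u i ⬝ᵥ (R *ᵥ v i)| := le_abs_self _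
      _ = Real.sqrt ((u i ⬝ᵥ (R *ᵥ v i))^2) := (Real.sqrt_sq_eq_abs _).symm
      _ ≤ Real.sqrt ((u i ⬝ᵥ u i) * (v i ⬝ᵥ v i)) := Real.sqrt_le_sqrt hcs
  -- sum bound
  have hsum2 : ∑ i, w i * ((u i ⬝ᵥ u i) * (v i ⬝ᵥ v i)) = (s : ℝ) * s := by
    calc ∑ i, w i * ((u i ⬝ᵥ u i) * (v i ⬝ᵥ v i))
        = ∑ i, (w i * (u i ⬝ᵥ u i)) * (v i ⬝ᵥ v i) := by
          refine Finset.sum_congr rfl fun i _ => by ring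
      _ = ∑ i, ((s : ℝ) * w' i) * (v i ⬝ᵥ v i) := by
          refine Finset.sum_congr rfl fun i _ => by rw [huw i]
      _ = (s : ℝ) * ∑ i, w' i * (v i ⬝ᵥ v i) := by
          rw [Finset.mul_sum]; exact Finset.sum_congr rfl fun i _ => by ring
      _ = (s : ℝ) * s := by rw [hv]
  have hCS2 : (∑ i, w i * Real.sqrt ((u i ⬝ᵥ u i) * (v i ⬝ᵥ v i)))^2
      ≤ (s : ℝ) * s := by
    have hcs := Finset.sum_mul_sq_le_sq_mul_sq Finset.univ
      (fun i => Real.sqrt (w i))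
      (fun i => Real.sqrt (w i) * Real.sqrt ((u i ⬝ᵥ u i) * (v i ⬝ᵥ v i)))
    have e1 : ∀ i : Fin n, Real.sqrt (w i) * (Real.sqrt (w i) * Real.sqrt ((u i ⬝ᵥ u i) * (v i ⬝ᵥ v i)))
        = w i * Real.sqrt ((u i ⬝ᵥ u i) * (v i ⬝ᵥ v i)) := by
      intro i
      rw [← mul_assoc, Real.mul_self_sqrt (hw0 i)]
    have e2 : ∀ i : Fin n, Real.sqrt (w i) ^ 2 = w i := fun i => Real.sq_sqrt (hw0 i)
    have e3 : ∀ i : Fin n, (Real.sqrt (w i) * Real.sqrt ((u i ⬝ᵥ u i) * (v i ⬝ᵥ v i)))^2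
        = w i * ((u i ⬝ᵥ u i) * (v i ⬝ᵥ v i)) := by
      intro i
      rw [mul_pow, Real.sq_sqrt (hw0 i), Real.sq_sqrt (mul_nonneg (hdots i) (hdots' i))]
    calc (∑ i, w i * Real.sqrt ((u i ⬝ᵥ u i) * (v i ⬝ᵥ v i)))^2
        = (∑ i, Real.sqrt (w i) * (Real.sqrt (w i) * Real.sqrt ((u i ⬝ᵥ u i) * (v i ⬝ᵥ v i))))^2 := by
          congr 1; exact Finset.sum_congr rfl fun i _ => (e1 i).symm
      _ ≤ (∑ i, Real.sqrt (w i)^2) * ∑ i, (Real.sqrt (w i) * Real.sqrt ((u i ⬝ᵥ u i) * (v i ⬝ᵥ v i)))^2 := hcs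
      _ = (∑ i, w i) * ∑ i, w i * ((u i ⬝ᵥ u i) * (v i ⬝ᵥ v i)) := by
          rw [Finset.sum_congr rfl fun i _ => e2 i, Finset.sum_congr rfl fun i _ => e3 i]
      _ = (s : ℝ) * s := by rw [hw1, one_mul, hsum2]
  have hsumnn : 0 ≤ ∑ i, w i * Real.sqrt ((u i ⬝ᵥ u i) * (v i ⬝ᵥ v i)) :=
    Finset.sum_nonneg fun i _ => mul_nonneg (hw0 i) (Real.sqrt_nonneg _)
  have hssum : ∑ i, w i * Real.sqrt ((u i ⬝ᵥ u i) * (v i ⬝ᵥ v i)) ≤ s := by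
    have hspos : (0:ℝ) < s := by exact_mod_cast hs
    nlinarith [hCS2, hsumnn]
  -- trace Z ≤ s
  have htrle : Z.trace ≤ s := by
    rw [htrZ]
    calc ∑ i, w i * (u i ⬝ᵥ (R *ᵥ v i))
        ≤ ∑ i, w i * Real.sqrt ((u i ⬝ᵥ u i) * (v i ⬝ᵥ v i)) :=
          Finset.sum_le_sum fun i _ => mul_le_mul_of_nonneg_left (hptCS i) (hw0 i)
      _ ≤ s := hssum
  have hZle : Z.det ≤ 1 := det_le_one_of_trace hs hZpd htrle
  have hZpos : 0 < Z.det := hZpd.det_pos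
  nlinarith [hdetZ]
end Core3

section Helpers
variable {α β : Type*} [Fintype α] [Fintype β] [DecidableEq α] [DecidableEq β]

lemma posDef_mul_mul_transpose {M : Matrix β β ℝ} (hM : M.PosDef) (P : Matrix α β ℝ)
    (hP : ∀ x : α → ℝ, x ≠ 0 → Pᵀ *ᵥ x ≠ 0) : (P * M * Pᵀ).PosDef := by
  refine Matrix.PosDef.of_dotProduct_mulVec_pos ?_ ?_
  · have h := (hM.posSemidef.mul_mul_conjTranspose_same P).1
    rwa [Matrix.conjTranspose_eq_transpose_of_trivial] at h
  · intro x hx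
    have hform : (star x) ⬝ᵥ ((P * M * Pᵀ) *ᵥ x) = star (Pᵀ *ᵥ x) ⬝ᵥ (M *ᵥ (Pᵀ *ᵥ x)) := by
      simp only [star_trivial, ← Matrix.mulVec_mulVec]
      rw [dotProduct_mulVec x]
      congr 1
      rw [← Matrix.transpose_transpose P, Matrix.vecMul_transpose, Matrix.transpose_transpose]
    rw [hform]
    exact hM.dotProduct_mulVec_pos (hP x hx)

lemma mul_vecMulVec_mul_transpose {γ : Type*} [Fintype γ] (Cm : Matrix α β ℝ) (Dm : Matrix γ β ℝ) (a : β → ℝ) :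
    Cm * Matrix.vecMulVec a a * Dmᵀ = Matrix.vecMulVec (Cm *ᵥ a) (Dm *ᵥ a) := by
  ext p q
  simp only [Matrix.mul_apply, Matrix.vecMulVec_apply, Matrix.transpose_apply,
    Matrix.mulVec, dotProduct, Finset.sum_mul, Finset.mul_sum]
  apply Finset.sum_congr rfl; intro j _
  apply Finset.sum_congr rfl; intro l _
  ring

lemma trace_vecMulVec (a : α → ℝ) : (Matrix.vecMulVec a a).trace = a ⬝ᵥ a := by
  simp [Matrix.trace, Matrix.diag, Matrix.vecMulVec_apply, dotProduct]

lemma posDef_submatrix_equiv {M : Matrix β β ℝ} (hM : M.PosDef) (e : α ≃ β) :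
    (M.submatrix e e).PosDef := by
  refine Matrix.PosDef.of_dotProduct_mulVec_pos ?_ ?_
  · have h := hM.1
    rw [Matrix.IsHermitian] at h ⊢
    rw [Matrix.conjTranspose_submatrix, h]
  · intro x hx
    have hxe : (fun j => x (e.symm j)) ≠ 0 := by
      intro h0
      apply hx
      funext i
      have := congrFun h0 (e i)
      simpa using this
    have := hM.dotProduct_mulVec_pos hxe
    convert this using 1
    simp only [star_trivial, dotProduct, Matrix.mulVec, Matrix.submatrix_apply]
    rw [← e.sum_comp]
    apply Finset.sum_congr rfl; intro i _
    simp only [Equiv.symm_apply_apply]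
    congr 1
    rw [← e.sum_comp]
    apply Finset.sum_congr rfl; intro j _
    simp [Equiv.symm_apply_apply]

end Helpers

section Main
variable {n s : ℕ}

/-- abbreviation for the information matrix over the sum index type -/
noncomputable def MS (y : Fin n → (Fin 1 ⊕ Fin s) → ℝ) (ω : Fin n → ℝ) :
    Matrix (Fin 1 ⊕ Fin s) (Fin 1 ⊕ Fin s) ℝ :=
  ∑ i, ω i • Matrix.vecMulVec (y i) (y i)

lemma MS_symm (y : Fin n → (Fin 1 ⊕ Fin s) → ℝ) (ω : Fin n → ℝ) (p q : Fin 1 ⊕ Fin s) :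
    MS y ω p q = MS y ω q p := by
  simp only [MS, Finset.sum_apply, Matrix.sum_apply, Matrix.smul_apply,
    Matrix.vecMulVec_apply, smul_eq_mul]
  exact Finset.sum_congr rfl fun i _ => by ring

/-- the lower-left block -/
noncomputable def colC (y : Fin n → (Fin 1 ⊕ Fin s) → ℝ) (ω : Fin n → ℝ) :
    Matrix (Fin s) (Fin 1) ℝ := (MS y ω).toBlocks₂₁

/-- the matrix `P = [-C | I]` -/
noncomputable def Pm (y : Fin n → (Fin 1 ⊕ Fin s) → ℝ) (ω : Fin n → ℝ) :
    Matrix (Fin s) (Fin 1 ⊕ Fin s) ℝ :=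
  Matrix.fromCols (-(colC y ω)) (1 : Matrix (Fin s) (Fin s) ℝ)

/-- Schur complement -/
noncomputable def Sm (y : Fin n → (Fin 1 ⊕ Fin s) → ℝ) (ω : Fin n → ℝ) :
    Matrix (Fin s) (Fin s) ℝ :=
  (MS y ω).toBlocks₂₂ - (MS y ω).toBlocks₂₁ * (MS y ω).toBlocks₁₂

variable (y : Fin n → (Fin 1 ⊕ Fin s) → ℝ) (ω : Fin n → ℝ)

lemma blocks11 (hy1 : ∀ i, y i (Sum.inl 0) = 1) (hω1 : ∑ i, ω i = 1) :
    (MS y ω).toBlocks₁₁ = 1 := by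
  ext p q
  have hp : p = 0 := Subsingleton.elim _ _
  have hq : q = 0 := Subsingleton.elim _ _
  subst hp; subst hq
  simp only [Matrix.toBlocks₁₁, Matrix.of_apply, MS, Finset.sum_apply, Matrix.sum_apply,
    Matrix.smul_apply, Matrix.vecMulVec_apply, smul_eq_mul, Matrix.one_apply_eq]
  calc ∑ i, ω i * (y i (Sum.inl 0) * y i (Sum.inl 0))
      = ∑ i, ω i := Finset.sum_congr rfl fun i _ => by rw [hy1 i]; ring
    _ = 1 := hω1

lemma blocks_symm : ((MS y ω).toBlocks₂₁)ᵀ = (MS y ω).toBlocks₁₂ := by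
  ext p q
  simp only [Matrix.transpose_apply, Matrix.toBlocks₂₁, Matrix.toBlocks₁₂, Matrix.of_apply]
  exact MS_symm y ω _ _

lemma PM_eq (hy1 : ∀ i, y i (Sum.inl 0) = 1) (hω1 : ∑ i, ω i = 1) :
    Pm y ω * MS y ω = Matrix.fromCols 0 (Sm y ω) := by
  conv_lhs => rw [← Matrix.fromBlocks_toBlocks (MS y ω)]
  rw [Pm, Matrix.fromCols_mul_fromBlocks]
  rw [blocks11 y ω hy1 hω1]
  have e1 : (-(colC y ω)) * (1 : Matrix (Fin 1) (Fin 1) ℝ) + (1 : Matrix (Fin s) (Fin s) ℝ) * (MS y ω).toBlocks₂₁ = 0 := by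
    rw [Matrix.mul_one, Matrix.one_mul, colC]; abel
  have e2 : (-(colC y ω)) * (MS y ω).toBlocks₁₂ + (1 : Matrix (Fin s) (Fin s) ℝ) * (MS y ω).toBlocks₂₂ = Sm y ω := by
    rw [Matrix.one_mul, Sm, Matrix.neg_mul, colC]; abel
  rw [e1, e2]

lemma PMPT_eq (ω' : Fin n → ℝ) (hy1 : ∀ i, y i (Sum.inl 0) = 1) (hω1 : ∑ i, ω i = 1) :
    Pm y ω * MS y ω * (Pm y ω')ᵀ = Sm y ω := by
  rw [PM_eq y ω hy1 hω1, Pm, Matrix.transpose_fromCols, Matrix.fromCols_mul_fromRows]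
  simp

lemma PT_mulVec_ne_zero (x : Fin s → ℝ) (hx : x ≠ 0) : (Pm y ω)ᵀ *ᵥ x ≠ 0 := by
  rw [Pm, Matrix.transpose_fromCols]
  intro h0
  apply hx
  funext j
  have := congrFun h0 (Sum.inr j)
  simpa [Matrix.fromRows_mulVec] using this

lemma Sm_posDef (hy1 : ∀ i, y i (Sum.inl 0) = 1) (hω1 : ∑ i, ω i = 1)
    (hM : (MS y ω).PosDef) : (Sm y ω).PosDef := by
  have h := posDef_mul_mul_transpose hM (Pm y ω) (PT_mulVec_ne_zero y ω)
  rwa [PMPT_eq y ω ω hy1 hω1] at h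

lemma det_MS_eq_det_Sm (hy1 : ∀ i, y i (Sum.inl 0) = 1) (hω1 : ∑ i, ω i = 1) :
    (MS y ω).det = (Sm y ω).det := by
  haveI : Invertible (1 : Matrix (Fin 1) (Fin 1) ℝ) := invertibleOne
  conv_lhs => rw [← Matrix.fromBlocks_toBlocks (MS y ω), blocks11 y ω hy1 hω1]
  rw [Matrix.det_fromBlocks₁₁]
  rw [Matrix.det_one, one_mul, invOf_one, Matrix.mul_one, Sm]

lemma MS_inv_eq (hy1 : ∀ i, y i (Sum.inl 0) = 1) (hω1 : ∑ i, ω i = 1)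
    (hM : (MS y ω).PosDef) :
    (MS y ω)⁻¹ = (Pm y ω)ᵀ * (Sm y ω)⁻¹ * Pm y ω
      + Matrix.fromBlocks 1 0 0 0 := by
  have hS : (Sm y ω).PosDef := Sm_posDef y ω hy1 hω1 hM
  apply Matrix.inv_eq_left_inv
  have hSinv : (Sm y ω)⁻¹ * Sm y ω = 1 := Matrix.nonsing_inv_mul _ hS.det_pos.ne'.isUnit
  have step1 : ((Pm y ω)ᵀ * (Sm y ω)⁻¹ * Pm y ω) * MS y ω
      = Matrix.fromBlocks 0 (-((colC y ω)ᵀ)) 0 1 := by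
    calc ((Pm y ω)ᵀ * (Sm y ω)⁻¹ * Pm y ω) * MS y ω
        = (Pm y ω)ᵀ * ((Sm y ω)⁻¹ * (Pm y ω * MS y ω)) := by
          simp only [Matrix.mul_assoc]
      _ = (Pm y ω)ᵀ * (Matrix.fromCols 0 1 : Matrix (Fin s) (Fin 1 ⊕ Fin s) ℝ) := by
          rw [PM_eq y ω hy1 hω1, Matrix.mul_fromCols, Matrix.mul_zero, hSinv]
      _ = Matrix.fromBlocks 0 (-((colC y ω)ᵀ)) 0 1 := by
          rw [Pm, Matrix.transpose_fromCols, Matrix.transpose_neg, Matrix.transpose_one]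
          rw [Matrix.fromRows_mul_fromCols]
          rw [Matrix.mul_zero, Matrix.mul_one, Matrix.mul_zero, Matrix.mul_one]
  have step2 : (Matrix.fromBlocks 1 0 0 0 : Matrix (Fin 1 ⊕ Fin s) (Fin 1 ⊕ Fin s) ℝ) * MS y ω
      = Matrix.fromBlocks 1 ((colC y ω)ᵀ) 0 0 := by
    conv_lhs => rw [← Matrix.fromBlocks_toBlocks (MS y ω)]
    rw [Matrix.fromBlocks_multiply]
    rw [blocks11 y ω hy1 hω1, ← blocks_symm y ω]
    simp [colC]
  rw [Matrix.add_mul, step1, step2, Matrix.fromBlocks_add]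
  simp

lemma e_eq (hy1 : ∀ i, y i (Sum.inl 0) = 1) (hω1 : ∑ i, ω i = 1)
    (hM : (MS y ω).PosDef) (a : (Fin 1 ⊕ Fin s) → ℝ) (ha : a (Sum.inl 0) = 1) :
    a ⬝ᵥ (MS y ω)⁻¹ *ᵥ a - 1
      = (Pm y ω *ᵥ a) ⬝ᵥ ((Sm y ω)⁻¹ *ᵥ (Pm y ω *ᵥ a)) := by
  rw [MS_inv_eq y ω hy1 hω1 hM]
  rw [Matrix.add_mulVec, dotProduct_add]
  have h2 : a ⬝ᵥ (Matrix.fromBlocks 1 0 0 0 : Matrix (Fin 1 ⊕ Fin s) (Fin 1 ⊕ Fin s) ℝ) *ᵥ a = 1 := by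
    simp only [dotProduct, Matrix.mulVec, Fintype.sum_sum_type]
    simp [Matrix.fromBlocks_apply₁₁, Matrix.fromBlocks_apply₁₂, Matrix.one_apply,
      dotProduct, Fin.sum_univ_one, ha]
  rw [h2]
  have h1 : a ⬝ᵥ ((Pm y ω)ᵀ * (Sm y ω)⁻¹ * Pm y ω) *ᵥ a
      = (Pm y ω *ᵥ a) ⬝ᵥ ((Sm y ω)⁻¹ *ᵥ (Pm y ω *ᵥ a)) := by
    rw [← Matrix.mulVec_mulVec, ← Matrix.mulVec_mulVec]
    rw [dotProduct_mulVec a, Matrix.vecMul_transpose]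
  rw [h1]
  ring

lemma main_sum (hs : 0 < s) (y : Fin n → (Fin 1 ⊕ Fin s) → ℝ)
    (hy1 : ∀ i, y i (Sum.inl 0) = 1)
    (w w' : Fin n → ℝ) (hw0 : ∀ i, 0 ≤ w i) (hw1 : ∑ i, w i = 1) (hw'1 : ∑ i, w' i = 1)
    (hM : (MS y w).PosDef) (hM' : (MS y w').PosDef)
    (hupd : ∀ i, w' i = w i * ((y i ⬝ᵥ (MS y w)⁻¹ *ᵥ y i) - 1) / s) :
    (MS y w).det ≤ (MS y w').det := by
  classical
  have hS : (Sm y w).PosDef := Sm_posDef y w hy1 hw1 hM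
  have hS' : (Sm y w').PosDef := Sm_posDef y w' hy1 hw'1 hM'
  set A := CFC.sqrt (Sm y w) with hAdef
  set A' := CFC.sqrt (Sm y w') with hA'def
  have hAA : A * A = Sm y w := CFC.sqrt_mul_sqrt_self _ hS.posSemidef.nonneg
  have hAA' : A' * A' = Sm y w' := CFC.sqrt_mul_sqrt_self _ hS'.posSemidef.nonneg
  have hAdet : A.det * A.det = (Sm y w).det := by rw [← Matrix.det_mul, hAA]
  have hA'det : A'.det * A'.det = (Sm y w').det := by rw [← Matrix.det_mul, hAA']
  have hAne : A.det ≠ 0 := fun h0 => by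
    rw [h0, mul_zero] at hAdet; exact hS.det_pos.ne' hAdet.symm
  have hA'ne : A'.det ≠ 0 := fun h0 => by
    rw [h0, mul_zero] at hA'det; exact hS'.det_pos.ne' hA'det.symm
  have hApd : A.PosDef := posDef_of_posSemidef_det_ne_zero (CFC.sqrt_nonneg (Sm y w)).posSemidef hAne
  have hA'pd : A'.PosDef := posDef_of_posSemidef_det_ne_zero (CFC.sqrt_nonneg (Sm y w')).posSemidef hA'ne
  have hApos : 0 < A.det := hApd.det_pos
  have hA'pos : 0 < A'.det := hA'pd.det_pos
  have hAsym : Aᵀ = A := by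
    have := (CFC.sqrt_nonneg (Sm y w)).posSemidef.1
    rwa [Matrix.IsHermitian, Matrix.conjTranspose_eq_transpose_of_trivial] at this
  have hA'sym : A'ᵀ = A' := by
    have := (CFC.sqrt_nonneg (Sm y w')).posSemidef.1
    rwa [Matrix.IsHermitian, Matrix.conjTranspose_eq_transpose_of_trivial] at this
  have hAinvsym : (A⁻¹)ᵀ = A⁻¹ := by rw [Matrix.transpose_nonsing_inv, hAsym]
  have hA'invsym : (A'⁻¹)ᵀ = A'⁻¹ := by rw [Matrix.transpose_nonsing_inv, hA'sym]
  have hAinv : A⁻¹ * A = 1 := Matrix.nonsing_inv_mul _ hAne.isUnit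
  have hAinv2 : A * A⁻¹ = 1 := Matrix.mul_nonsing_inv _ hAne.isUnit
  have hA'inv : A'⁻¹ * A' = 1 := Matrix.nonsing_inv_mul _ hA'ne.isUnit
  have hA'inv2 : A' * A'⁻¹ = 1 := Matrix.mul_nonsing_inv _ hA'ne.isUnit
  have hAinvSq : A⁻¹ * A⁻¹ = (Sm y w)⁻¹ := by
    rw [← hAA, Matrix.mul_inv_rev]
  have hA'invSq : A'⁻¹ * A'⁻¹ = (Sm y w')⁻¹ := by
    rw [← hAA', Matrix.mul_inv_rev]
  -- the transformed vectors
  set C₁ := A⁻¹ * Pm y w with hC₁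
  set C₂ := A'⁻¹ * Pm y w' with hC₂
  set u : Fin n → Fin s → ℝ := fun i => C₁ *ᵥ y i with hu
  set v : Fin n → Fin s → ℝ := fun i => C₂ *ᵥ y i with hv
  -- whitening identity for w'
  have hwhite : C₂ * MS y w' * C₂ᵀ = 1 := by
    rw [hC₂, Matrix.transpose_mul, hA'invsym]
    calc A'⁻¹ * Pm y w' * MS y w' * ((Pm y w')ᵀ * A'⁻¹)
        = A'⁻¹ * (Pm y w' * MS y w' * (Pm y w')ᵀ) * A'⁻¹ := by
          simp only [Matrix.mul_assoc]
      _ = A'⁻¹ * Sm y w' * A'⁻¹ := by rw [PMPT_eq y w' w' hy1 hw'1]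
      _ = A'⁻¹ * (A' * A') * A'⁻¹ := by rw [hAA']
      _ = (A'⁻¹ * A') * (A' * A'⁻¹) := by simp only [Matrix.mul_assoc]
      _ = 1 := by rw [hA'inv, hA'inv2, Matrix.one_mul]
  -- expansion of conjugated sums as vecMulVec sums
  have hexpand : ∀ (ω : Fin n → ℝ) (D E : Matrix (Fin s) (Fin 1 ⊕ Fin s) ℝ),
      D * MS y ω * Eᵀ = ∑ i, ω i • Matrix.vecMulVec (D *ᵥ y i) (E *ᵥ y i) := by
    intro ω D E
    rw [MS, Matrix.mul_sum, Matrix.sum_mul]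
    refine Finset.sum_congr rfl fun i _ => ?_
    rw [Matrix.mul_smul, Matrix.smul_mul, mul_vecMulVec_mul_transpose]
  -- hv : ∑ w' |v|² = s
  have hvsum : ∑ i, w' i * (v i ⬝ᵥ v i) = (s : ℝ) := by
    have h1 : (C₂ * MS y w' * C₂ᵀ).trace = (s : ℝ) := by
      rw [hwhite, Matrix.trace_one]
      simp
    rw [hexpand w' C₂ C₂] at h1
    rw [Matrix.trace_sum] at h1
    rw [← h1]
    refine Finset.sum_congr rfl fun i _ => ?_
    rw [Matrix.trace_smul, _root_.trace_vecMulVec]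
    simp [hv, smul_eq_mul]
  -- huw : w i * |u i|² = s * w' i
  have huu : ∀ i, u i ⬝ᵥ u i = y i ⬝ᵥ (MS y w)⁻¹ *ᵥ y i - 1 := by
    intro i
    rw [e_eq y w hy1 hw1 hM (y i) (hy1 i)]
    rw [hu]
    simp only [hC₁, ← Matrix.mulVec_mulVec]
    rw [dotProduct_mulVec (A⁻¹ *ᵥ (Pm y w *ᵥ y i))]
    rw [show (A⁻¹ *ᵥ (Pm y w *ᵥ y i)) ᵥ* A⁻¹ = (A⁻¹ * A⁻¹) *ᵥ (Pm y w *ᵥ y i) by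
      conv_lhs => rw [← hAinvsym, Matrix.vecMul_transpose]
      rw [Matrix.mulVec_mulVec, hAinvsym]]
    rw [hAinvSq]
    exact dotProduct_comm _ _
  have hsne : (s : ℝ) ≠ 0 := by positivity
  have huw : ∀ i, w i * (u i ⬝ᵥ u i) = (s : ℝ) * w' i := by
    intro i
    rw [huu i, hupd i]
    field_simp
  -- the G matrix
  set G := C₁ * MS y w * C₂ᵀ with hGdef
  have hGsum : G = ∑ i, w i • Matrix.vecMulVec (u i) (v i) := hexpand w C₁ C₂
  have hGeq : G = A⁻¹ * Sm y w * A'⁻¹ := by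
    rw [hGdef, hC₁, hC₂, Matrix.transpose_mul, hA'invsym]
    calc A⁻¹ * Pm y w * MS y w * ((Pm y w')ᵀ * A'⁻¹)
        = A⁻¹ * (Pm y w * MS y w * (Pm y w')ᵀ) * A'⁻¹ := by
          simp only [Matrix.mul_assoc]
      _ = A⁻¹ * Sm y w * A'⁻¹ := by rw [PMPT_eq y w w' hy1 hw1]
  have hGdetval : G.det = A.det / A'.det := by
    rw [hGeq, Matrix.det_mul, Matrix.det_mul, Matrix.det_nonsing_inv, Matrix.det_nonsing_inv, Ring.inverse_eq_inv']
    rw [← hAdet]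
    field_simp
  have hGdetpos : 0 < G.det := by
    rw [hGdetval]; positivity
  -- apply the core inequality
  have hcore : G.det ≤ 1 := core_det_le_one hs w w' hw0 hw1 u v huw hvsum hGsum hGdetpos
  have hdetled : A.det ≤ A'.det := by
    rw [hGdetval, div_le_one hA'pos] at hcore
    exact hcore
  have : (Sm y w).det ≤ (Sm y w').det := by
    rw [← hAdet, ← hA'det]
    nlinarith
  rw [det_MS_eq_det_Sm y w hy1 hw1, det_MS_eq_det_Sm y w' hy1 hw'1]
  exact this

end Main

section Reduce
lemma dot_submatrix {α : Type*} [Fintype α] {m : ℕ} (B : Matrix (Fin m) (Fin m) ℝ)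
    (a : Fin m → ℝ) (e : α ≃ Fin m) :
    (fun p => a (e p)) ⬝ᵥ (B.submatrix e e) *ᵥ (fun p => a (e p)) = a ⬝ᵥ B *ᵥ a := by
  simp only [dotProduct, Matrix.mulVec, Matrix.submatrix_apply]
  rw [← e.sum_comp (fun p' => a p' * ∑ q', B p' q' * a q')]
  apply Finset.sum_congr rfl; intro p _
  congr 1
  rw [← e.sum_comp (fun q' => B (e p) q' * a q')]

end Reduce

end Aux

/-- Monotonicity of Titterington's Algorithm II for `m ≥ 2`: if each design point has first
coordinate 1, the design matrix has full rank `m`, and `w, w' ∈ Ω₊` are related by the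
Algorithm II update, then `det M(w) ≤ det M(w')`. -/
theorem stmt_1 {n m : ℕ} (hm : 2 ≤ m) (hnm : m ≤ n)
    (x : Fin n → Fin m → ℝ)
    (hx1 : ∀ i, x i ⟨0, by omega⟩ = 1)
    (hrank : (Matrix.of x).rank = m)
    (w w' : Fin n → ℝ)
    (hw0 : ∀ i, 0 ≤ w i) (hw1 : ∑ i, w i = 1) (hMw : (Mmat x w).PosDef)
    (hw'0 : ∀ i, 0 ≤ w' i) (hw'1 : ∑ i, w' i = 1) (hMw' : (Mmat x w').PosDef)
    (hupd : ∀ i, w' i = w i * ((x i ⬝ᵥ (Mmat x w)⁻¹ *ᵥ x i) - 1) / ((m : ℝ) - 1)) :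
    (Mmat x w).det ≤ (Mmat x w').det := by
  classical
  set s := m - 1 with hsdef
  have hs : 0 < s := by omega
  have hms : m = 1 + s := by omega
  let e : (Fin 1 ⊕ Fin s) ≃ Fin m := finSumFinEquiv.trans (finCongr hms.symm)
  set y : Fin n → (Fin 1 ⊕ Fin s) → ℝ := fun i p => x i (e p) with hydef
  have he0 : e (Sum.inl 0) = (⟨0, by omega⟩ : Fin m) := by
    apply Fin.ext
    simp [e]
  have hy1 : ∀ i, y i (Sum.inl 0) = 1 := by
    intro i
    rw [hydef]
    simp only
    rw [he0]
    exact hx1 i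
  have hMSw : ∀ ω : Fin n → ℝ, MS y ω = (Mmat x ω).submatrix e e := by
    intro ω
    ext p q
    simp [MS, Mmat, Matrix.submatrix_apply, Matrix.sum_apply, Matrix.vecMulVec_apply, hydef]
  have hMpd : (MS y w).PosDef := by rw [hMSw w]; exact posDef_submatrix_equiv hMw e
  have hM'pd : (MS y w').PosDef := by rw [hMSw w']; exact posDef_submatrix_equiv hMw' e
  have hcast : ((m : ℝ) - 1) = (s : ℝ) := by
    have : (m : ℝ) = (s : ℝ) + 1 := by rw [hms]; push_cast; ring
    rw [this]; ring
  have hdot : ∀ i, y i ⬝ᵥ (MS y w)⁻¹ *ᵥ y i = x i ⬝ᵥ (Mmat x w)⁻¹ *ᵥ x i := by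
    intro i
    rw [hMSw w, Matrix.inv_submatrix_equiv]
    exact dot_submatrix _ _ e
  have hupd' : ∀ i, w' i = w i * ((y i ⬝ᵥ (MS y w)⁻¹ *ᵥ y i) - 1) / s := by
    intro i
    rw [hdot i, ← hcast]
    exact hupd i
  have hmain := main_sum hs y hy1 w w' hw0 hw1 hw'1 hMpd hM'pd hupd'
  rw [hMSw w, hMSw w'] at hmain
  rwa [Matrix.det_submatrix_equiv_self, Matrix.det_submatrix_equiv_self] at hmain
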